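/- Let f be continuous increasing with f(0)=0, f>0 on (0,∞), F(t)=∫₀ᵗ f, and suppose ∫₁^∞ ds/√(F(s)) < ∞. Let u ∈ C²([0,∞)) satisfy u'' ≥ (1/N) f(u) on [0,∞), u(0)=u₀>0, u'(0)=0, u' ≥ 0. Then u cannot be defined on all of [0,∞); more precisely, there exists R < ∞ (depending only on u₀, N, f) such that if u is defined on [0,R'] with u' > 0 on (0,R'], then R' ≤ R. -/

import Mathlib

open MeasureTheory Filter intervalIntegral Topology

/-- Under the Keller–Osserman convergence `∫₁^∞ ds/√(F s) < ∞`, any function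
with `u'' ≥ (1/N) f(u)`, `u 0 = u₀ > 0`, `u' 0 = 0`, `u' ≥ 0` cannot exist up to
an arbitrarily large `R'`: there is `R < ∞` depending only on `u₀, N, f`
bounding every such interval of existence. -/
theorem stmt_8 (f F : ℝ → ℝ)
    (hfc : ContinuousOn f (Set.Ici 0))
    (hfmono : StrictMonoOn f (Set.Ici 0))
    (hf0 : f 0 = 0)
    (hfpos : ∀ s, 0 < s → 0 < f s)
    (hF : ∀ t, F t = ∫ s in (0:ℝ)..t, f s)
    (hint : IntegrableOn (fun s => 1 / Real.sqrt (F s)) (Set.Ici 1))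
    (N u₀ : ℝ) (hN : 1 ≤ N) (hu₀ : 0 < u₀) :
    ∃ R : ℝ, ∀ (u u' u'' : ℝ → ℝ) (R' : ℝ), 0 < R' →
      (∀ r ∈ Set.Icc 0 R', HasDerivAt u (u' r) r) →
      (∀ r ∈ Set.Icc 0 R', HasDerivAt u' (u'' r) r) →
      ContinuousOn u'' (Set.Icc 0 R') →
      (∀ r ∈ Set.Icc 0 R', (1 / N) * f (u r) ≤ u'' r) →
      u 0 = u₀ → u' 0 = 0 →
      (∀ r ∈ Set.Icc 0 R', 0 ≤ u' r) →
      (∀ r ∈ Set.Ioc 0 R', 0 < u' r) →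
      R' ≤ R := by
  have hN0 : (0:ℝ) < N := lt_of_lt_of_le one_pos hN
  set c : ℝ := 2 / N with hc
  have hc0 : 0 < c := div_pos two_pos hN0
  -- basic facts about f
  have hfnonneg : ∀ s, 0 ≤ s → 0 ≤ f s := by
    intro s hs
    rcases eq_or_lt_of_le hs with h | h
    · simp [← h, hf0]
    · exact (hfpos s h).le
  have hfint : ∀ a b : ℝ, 0 ≤ a → 0 ≤ b → IntervalIntegrable f volume a b := by
    intro a b ha hb
    apply (hfc.mono ?_).intervalIntegrable
    intro x hx
    exact le_trans (le_min ha hb) hx.1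
  -- derivative of F
  have hFeq : F = fun t => ∫ s in (0:ℝ)..t, f s := funext hF
  have hFder : ∀ t : ℝ, 0 < t → HasDerivAt F (f t) t := by
    intro t ht
    have h1 : IntervalIntegrable f volume 0 t := hfint 0 t le_rfl ht.le
    have hct : ContinuousAt f t := hfc.continuousAt (Ici_mem_nhds ht)
    have hmeas : StronglyMeasurableAtFilter f (𝓝 t) :=
      ⟨Set.Ioi 0, Ioi_mem_nhds ht,
        (hfc.mono Set.Ioi_subset_Ici_self).aestronglyMeasurable measurableSet_Ioi⟩
    rw [hFeq]
    exact intervalIntegral.integral_hasDerivAt_right h1 hmeas hct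
  -- F b - F a = ∫ a..b f
  have hFsub : ∀ a b : ℝ, 0 ≤ a → a ≤ b → F b - F a = ∫ s in a..b, f s := by
    intro a b ha hab
    rw [hF a, hF b,
      ← intervalIntegral.integral_add_adjacent_intervals (hfint 0 a le_rfl ha)
        (hfint a b ha (le_trans ha hab))]
    ring
  have hFmono : ∀ a b : ℝ, 0 ≤ a → a ≤ b → F a ≤ F b := by
    intro a b ha hab
    have h1 : 0 ≤ F b - F a := by
      rw [hFsub a b ha hab]
      exact intervalIntegral.integral_nonneg hab
        (fun x hx => hfnonneg x (le_trans ha hx.1))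
    linarith
  -- lower bound on F s - F u₀
  have hFlb : ∀ s : ℝ, u₀ ≤ s → f u₀ * (s - u₀) ≤ F s - F u₀ := by
    intro s hs
    rw [hFsub u₀ s hu₀.le hs]
    have h1 : (∫ _ in u₀..s, f u₀) ≤ ∫ x in u₀..s, f x := by
      apply intervalIntegral.integral_mono_on hs intervalIntegrable_const
        (hfint u₀ s hu₀.le (le_trans hu₀.le hs))
      intro x hx
      exact hfmono.monotoneOn hu₀.le (le_trans hu₀.le hx.1) hx.1
    simpa [intervalIntegral.integral_const, smul_eq_mul, mul_comm] using h1
  have hfu₀ : 0 < f u₀ := hfpos u₀ hu₀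
  have hFu₀pos : 0 < F u₀ := by
    rw [hF u₀]
    exact intervalIntegral_pos_of_pos_on (hfint 0 u₀ le_rfl hu₀.le)
      (fun x hx => hfpos x hx.1) hu₀
  have hF1pos : 0 < F 1 := by
    rw [hF 1]
    exact intervalIntegral_pos_of_pos_on (hfint 0 1 le_rfl one_pos.le)
      (fun x hx => hfpos x hx.1) one_pos
  -- positivity of F s - F u₀ for s > u₀
  have hFgt : ∀ s : ℝ, u₀ < s → 0 < F s - F u₀ := by
    intro s hs
    have := hFlb s hs.le
    nlinarith [hfu₀, sub_pos.2 hs]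
  -- the comparison function g
  set g : ℝ → ℝ := fun s => 1 / Real.sqrt (c * (F s - F u₀)) with hg
  have hgnn : ∀ s, 0 ≤ g s := fun s => by positivity
  have hgc : ContinuousOn g (Set.Ioi u₀) := by
    intro t ht
    have ht' : (0:ℝ) < t := lt_trans hu₀ ht
    have h1 : ContinuousAt (fun s => c * (F s - F u₀)) t :=
      (((hFder t ht').continuousAt.sub continuousAt_const).const_mul c)
    have h2 : ContinuousAt (fun s => Real.sqrt (c * (F s - F u₀))) t :=
      Real.continuous_sqrt.continuousAt.comp h1
    have hne : Real.sqrt (c * (F t - F u₀)) ≠ 0 := by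
      have := hFgt t ht
      positivity
    exact (ContinuousAt.div continuousAt_const h2 hne).continuousWithinAt
  -- existence of s₁ with F s₁ ≥ 2 F u₀
  obtain ⟨s₁, hs₁ge, hs₁F⟩ : ∃ s₁, max 1 (u₀ + 1) ≤ s₁ ∧ 2 * F u₀ ≤ F s₁ := by
    by_contra h
    push_neg at h
    set s₀ := max 1 (u₀ + 1) with hs₀
    have hs₀1 : (1:ℝ) ≤ s₀ := le_max_left _ _
    have hki : IntegrableOn (fun s => 1 / Real.sqrt (F s)) (Set.Ici s₀) :=
      hint.mono_set (Set.Ici_subset_Ici.2 hs₀1)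
    set k : ℝ := 1 / Real.sqrt (2 * F u₀) with hk
    have hk0 : 0 < k := by positivity
    have hconst : IntegrableOn (fun _ : ℝ => k) (Set.Ici s₀) := by
      apply hki.mono' aestronglyMeasurable_const
      rw [ae_restrict_iff' measurableSet_Ici]
      filter_upwards with s
      intro hs
      have h1 : F s < 2 * F u₀ := h s hs
      have hFs : 0 < F s := lt_of_lt_of_le hF1pos (hFmono 1 s one_pos.le (le_trans hs₀1 hs))
      have h2 : Real.sqrt (F s) ≤ Real.sqrt (2 * F u₀) := Real.sqrt_le_sqrt h1.le
      have h3 : 0 < Real.sqrt (F s) := Real.sqrt_pos.2 hFs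
      rw [Real.norm_eq_abs, abs_of_nonneg hk0.le, hk]
      exact one_div_le_one_div_of_le h3 h2
    rw [integrableOn_const_iff] at hconst
    rcases hconst with h1 | h1
    · exact hk0.ne' (by simpa using h1)
    · rw [Real.volume_Ici] at h1
      exact (lt_irrefl _ h1).elim
  have hs₁1 : (1:ℝ) ≤ s₁ := le_trans (le_max_left _ _) hs₁ge
  have hs₁u₀ : u₀ < s₁ := lt_of_lt_of_le (by linarith) (le_trans (le_max_right _ _) hs₁ge)
  -- integrability of g on (u₀, s₁]
  have hgi1 : IntegrableOn g (Set.Ioc u₀ s₁) := by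
    have hgmeas1 : AEStronglyMeasurable g (volume.restrict (Set.Ioc u₀ s₁)) :=
      (hgc.mono Set.Ioc_subset_Ioi_self).aestronglyMeasurable measurableSet_Ioc
    set K : ℝ := 1 / Real.sqrt (c * f u₀) with hK
    have hmaj : IntegrableOn (fun s => K * (s - u₀) ^ (-(1/2) : ℝ)) (Set.Ioc u₀ s₁) := by
      have h1 : IntervalIntegrable (fun x : ℝ => x ^ (-(1/2) : ℝ)) volume 0 (s₁ - u₀) :=
        intervalIntegrable_rpow' (by norm_num)
      have h2 : IntervalIntegrable (fun x : ℝ => (x - u₀) ^ (-(1/2) : ℝ)) volume u₀ s₁ := by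
        have := h1.comp_sub_right u₀
        simpa using this
      have h3 := h2.const_mul K
      rwa [intervalIntegrable_iff_integrableOn_Ioc_of_le hs₁u₀.le] at h3
    apply hmaj.mono' hgmeas1
    rw [ae_restrict_iff' measurableSet_Ioc]
    filter_upwards with s
    rintro ⟨hs1, hs2⟩
    have hxpos : 0 < s - u₀ := sub_pos.2 hs1
    have hb : c * f u₀ * (s - u₀) ≤ c * (F s - F u₀) := by
      have := hFlb s hs1.le
      nlinarith [hc0]
    have hb0 : 0 < c * f u₀ * (s - u₀) := by positivity
    have h4 : Real.sqrt (c * f u₀ * (s - u₀)) ≤ Real.sqrt (c * (F s - F u₀)) :=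
      Real.sqrt_le_sqrt hb
    have h5 : 0 < Real.sqrt (c * f u₀ * (s - u₀)) := Real.sqrt_pos.2 hb0
    have hrw : (s - u₀) ^ (-(1/2) : ℝ) = (Real.sqrt (s - u₀))⁻¹ := by
      rw [Real.rpow_neg hxpos.le, Real.sqrt_eq_rpow]
    rw [Real.norm_eq_abs, abs_of_nonneg (hgnn s)]
    calc g s ≤ 1 / Real.sqrt (c * f u₀ * (s - u₀)) :=
          one_div_le_one_div_of_le h5 h4
      _ = K * (s - u₀) ^ (-(1/2) : ℝ) := by
          rw [Real.sqrt_mul (by positivity) (s - u₀), hrw, hK]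
          have h6 : Real.sqrt (c * f u₀) ≠ 0 := by positivity
          have h7 : Real.sqrt (s - u₀) ≠ 0 := by positivity
          field_simp
  -- integrability of g on (s₁, ∞)
  have hgi2 : IntegrableOn g (Set.Ioi s₁) := by
    have hgmeas2 : AEStronglyMeasurable g (volume.restrict (Set.Ioi s₁)) :=
      (hgc.mono (Set.Ioi_subset_Ioi hs₁u₀.le)).aestronglyMeasurable measurableSet_Ioi
    set K₂ : ℝ := 1 / Real.sqrt (c / 2) with hK₂
    have hmaj : IntegrableOn (fun s => K₂ * (1 / Real.sqrt (F s))) (Set.Ioi s₁) :=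
      ((hint.mono_set (fun x hx => le_trans hs₁1 (le_of_lt hx))).const_mul K₂)
    apply hmaj.mono' hgmeas2
    rw [ae_restrict_iff' measurableSet_Ioi]
    filter_upwards with s
    intro hs
    have hsu₀ : u₀ < s := lt_trans hs₁u₀ hs
    have hFs₁ : F s₁ ≤ F s := hFmono s₁ s (by linarith) hs.le
    have hFs : 0 < F s := by linarith [hFu₀pos]
    have hb : c / 2 * F s ≤ c * (F s - F u₀) := by nlinarith [hc0]
    have hb0 : 0 < c / 2 * F s := by positivity
    have h4 : Real.sqrt (c / 2 * F s) ≤ Real.sqrt (c * (F s - F u₀)) :=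
      Real.sqrt_le_sqrt hb
    have h5 : 0 < Real.sqrt (c / 2 * F s) := Real.sqrt_pos.2 hb0
    rw [Real.norm_eq_abs, abs_of_nonneg (hgnn s)]
    calc g s ≤ 1 / Real.sqrt (c / 2 * F s) := one_div_le_one_div_of_le h5 h4
      _ = K₂ * (1 / Real.sqrt (F s)) := by
          rw [Real.sqrt_mul (by positivity) (F s), hK₂]
          have h6 : Real.sqrt (c / 2) ≠ 0 := by positivity
          have h7 : Real.sqrt (F s) ≠ 0 := by positivity
          field_simp
  have hgint : IntegrableOn g (Set.Ioi u₀) := by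
    rw [← Set.Ioc_union_Ioi_eq_Ioi hs₁u₀.le]
    exact hgi1.union hgi2
  -- the uniform bound C
  set C : ℝ := ∫ s in Set.Ioi u₀, g s with hC
  have hC0 : 0 ≤ C := setIntegral_nonneg measurableSet_Ioi (fun x _ => hgnn x)
  have hCb : ∀ a b : ℝ, u₀ < a → a ≤ b → (∫ s in a..b, g s) ≤ C := by
    intro a b ha hab
    rw [intervalIntegral.integral_of_le hab]
    apply setIntegral_mono_set hgint
    · exact Filter.Eventually.of_forall (fun x => hgnn x)
    · exact HasSubset.Subset.eventuallyLE (fun x hx => lt_of_lt_of_le ha hx.1.le)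
  -- antiderivative G of g
  set G : ℝ → ℝ := fun t => ∫ s in (u₀ + 1)..t, g s with hG
  have hGder : ∀ t : ℝ, u₀ < t → HasDerivAt G (g t) t := by
    intro t ht
    have h1 : IntervalIntegrable g volume (u₀ + 1) t := by
      apply (hgc.mono ?_).intervalIntegrable
      intro x hx
      exact lt_of_lt_of_le (lt_min (by linarith) ht) hx.1
    exact intervalIntegral.integral_hasDerivAt_right h1
      (hgc.stronglyMeasurableAtFilter isOpen_Ioi t ht)
      (hgc.continuousAt (Ioi_mem_nhds ht))
  have hGb : ∀ t : ℝ, u₀ < t → -C ≤ G t ∧ G t ≤ C := by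
    intro t ht
    rcases le_or_gt (u₀ + 1) t with h | h
    · constructor
      · have h1 : (0:ℝ) ≤ ∫ s in (u₀ + 1)..t, g s :=
          intervalIntegral.integral_nonneg h (fun x _ => hgnn x)
        linarith
      · exact hCb (u₀ + 1) t (by linarith) h
    · have hsymm : G t = -∫ s in t..(u₀ + 1), g s :=
        intervalIntegral.integral_symm t (u₀ + 1)
      constructor
      · rw [hsymm]
        have h2 : (∫ s in t..(u₀ + 1), g s) ≤ C := hCb t (u₀ + 1) ht h.le
        linarith
      · rw [hsymm]
        have h1 : (0:ℝ) ≤ ∫ s in t..(u₀ + 1), g s :=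
          intervalIntegral.integral_nonneg h.le (fun x _ => hgnn x)
        linarith
  -- the uniform bound R
  refine ⟨2 * C, ?_⟩
  intro u u' u'' R' hR' hdu hdu' hcu'' hineq hu0 hu'0 hu'nn hu'pos
  -- continuity and monotonicity of u
  have hucont : ContinuousOn u (Set.Icc 0 R') :=
    fun r hr => (hdu r hr).continuousAt.continuousWithinAt
  have humono : MonotoneOn u (Set.Icc 0 R') := by
    apply monotoneOn_of_deriv_nonneg (convex_Icc 0 R') hucont
    · intro x hx
      rw [interior_Icc] at hx
      exact (hdu x (Set.Ioo_subset_Icc_self hx)).differentiableAt.differentiableWithinAt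
    · intro x hx
      rw [interior_Icc] at hx
      rw [(hdu x (Set.Ioo_subset_Icc_self hx)).deriv]
      exact hu'nn x (Set.Ioo_subset_Icc_self hx)
  have hustrict : StrictMonoOn u (Set.Icc 0 R') := by
    apply strictMonoOn_of_deriv_pos (convex_Icc 0 R') hucont
    intro x hx
    rw [interior_Icc] at hx
    rw [(hdu x (Set.Ioo_subset_Icc_self hx)).deriv]
    exact hu'pos x ⟨hx.1, hx.2.le⟩
  have h0mem : (0:ℝ) ∈ Set.Icc (0:ℝ) R' := ⟨le_rfl, hR'.le⟩
  have hu_ge : ∀ r ∈ Set.Icc (0:ℝ) R', u₀ ≤ u r := by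
    intro r hr
    calc u₀ = u 0 := hu0.symm
      _ ≤ u r := humono h0mem hr hr.1
  have hu_gt : ∀ r ∈ Set.Ioc (0:ℝ) R', u₀ < u r := by
    intro r hr
    calc u₀ = u 0 := hu0.symm
      _ < u r := hustrict h0mem ⟨hr.1.le, hr.2⟩ hr.1
  -- the energy function φ
  set φ : ℝ → ℝ := fun r => u' r ^ 2 - c * F (u r) with hφ
  have hφder : ∀ r ∈ Set.Icc (0:ℝ) R',
      HasDerivAt φ (2 * u' r * u'' r - c * (f (u r) * u' r)) r := by
    intro r hr
    have hur : (0:ℝ) < u r := lt_of_lt_of_le hu₀ (hu_ge r hr)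
    have h1 : HasDerivAt (fun x => u' x ^ 2) (2 * u' r * u'' r) r := by
      have := (hdu' r hr).pow 2
      exact this.congr_deriv (by norm_num)
    have h2 : HasDerivAt (fun x => c * F (u x)) (c * (f (u r) * u' r)) r := by
      have := ((hFder (u r) hur).comp r (hdu r hr)).const_mul c
      simpa [Function.comp] using this
    exact h1.sub h2
  have hφmono : MonotoneOn φ (Set.Icc 0 R') := by
    apply monotoneOn_of_deriv_nonneg (convex_Icc 0 R')
    · exact fun r hr => (hφder r hr).continuousAt.continuousWithinAt
    · intro x hx
      rw [interior_Icc] at hx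
      exact (hφder x (Set.Ioo_subset_Icc_self hx)).differentiableAt.differentiableWithinAt
    · intro x hx
      rw [interior_Icc] at hx
      have hx' := Set.Ioo_subset_Icc_self hx
      rw [(hφder x hx').deriv]
      have hA : (1 / N) * f (u x) ≤ u'' x := hineq x hx'
      have hB : 0 ≤ u' x := hu'nn x hx'
      have hf0' : 0 ≤ f (u x) := hfnonneg (u x) (le_trans hu₀.le (hu_ge x hx'))
      have hc' : c * (f (u x) * u' x) = 2 * (u' x * (1 / N * f (u x))) := by
        rw [hc]; ring
      nlinarith [mul_le_mul_of_nonneg_left hA hB]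
  have hkey : ∀ r ∈ Set.Icc (0:ℝ) R', c * (F (u r) - F u₀) ≤ u' r ^ 2 := by
    intro r hr
    have h1 : φ 0 ≤ φ r := hφmono h0mem hr hr.1
    rw [hφ] at h1
    simp only [hu0, hu'0] at h1
    nlinarith [h1]
  have hgu : ∀ r ∈ Set.Ioc (0:ℝ) R', 1 ≤ g (u r) * u' r := by
    intro r hr
    have hr' : r ∈ Set.Icc (0:ℝ) R' := ⟨hr.1.le, hr.2⟩
    have hx : 0 < c * (F (u r) - F u₀) :=
      mul_pos hc0 (hFgt (u r) (hu_gt r hr))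
    have hsqrt : 0 < Real.sqrt (c * (F (u r) - F u₀)) := Real.sqrt_pos.2 hx
    have hsq : Real.sqrt (c * (F (u r) - F u₀)) ≤ u' r := by
      have h1 := hkey r hr'
      calc Real.sqrt (c * (F (u r) - F u₀)) ≤ Real.sqrt (u' r ^ 2) :=
            Real.sqrt_le_sqrt h1
        _ = u' r := Real.sqrt_sq (hu'nn r hr')
    calc (1:ℝ) = (1 / Real.sqrt (c * (F (u r) - F u₀))) *
          Real.sqrt (c * (F (u r) - F u₀)) := (one_div_mul_cancel hsqrt.ne').symm
      _ ≤ g (u r) * u' r :=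
          mul_le_mul_of_nonneg_left hsq (by positivity)
  -- main estimate : for all small ε, R' ≤ ε + 2C
  have hmain : ∀ ε : ℝ, 0 < ε → ε < R' → R' ≤ ε + 2 * C := by
    intro ε hε hεR
    set H : ℝ → ℝ := fun r => G (u r) - r with hH
    have hHder : ∀ r ∈ Set.Icc ε R', HasDerivAt H (g (u r) * u' r - 1) r := by
      intro r hr
      have hr' : r ∈ Set.Icc (0:ℝ) R' := ⟨le_trans hε.le hr.1, hr.2⟩
      have h1 := (hGder (u r) (hu_gt r ⟨lt_of_lt_of_le hε hr.1, hr.2⟩)).comp r (hdu r hr')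
      have h2 : HasDerivAt (fun x => G (u x)) (g (u r) * u' r) r := by
        exact h1
      exact h2.sub (hasDerivAt_id r)
    have hHmono : MonotoneOn H (Set.Icc ε R') := by
      apply monotoneOn_of_deriv_nonneg (convex_Icc ε R')
      · exact fun r hr => (hHder r hr).continuousAt.continuousWithinAt
      · intro x hx
        rw [interior_Icc] at hx
        exact (hHder x (Set.Ioo_subset_Icc_self hx)).differentiableAt.differentiableWithinAt
      · intro x hx
        rw [interior_Icc] at hx
        rw [(hHder x (Set.Ioo_subset_Icc_self hx)).deriv]
        have := hgu x ⟨lt_of_lt_of_le hε (Set.Ioo_subset_Icc_self hx).1, hx.2.le⟩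
        linarith
    have h1 : H ε ≤ H R' :=
      hHmono ⟨le_rfl, hεR.le⟩ ⟨hεR.le, le_rfl⟩ hεR.le
    rw [hH] at h1
    simp only at h1
    have h2 := hGb (u R') (hu_gt R' ⟨hR', le_rfl⟩)
    have h3 := hGb (u ε) (hu_gt ε ⟨hε, hεR.le⟩)
    linarith [h1, h2.1, h2.2, h3.1, h3.2]
  -- conclude
  by_contra hlt
  push_neg at hlt
  have hε : 0 < (R' - 2 * C) / 2 := by linarith
  have hεR : (R' - 2 * C) / 2 < R' := by linarith
  have := hmain ((R' - 2 * C) / 2) hε hεR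
  linarith
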